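/- For every integer n ≥ 1: Σ_{k=0}^n C(2n, 2k) · (2k)! · c_{2k} = 0, where c_{2k} denotes the coefficient of u^{2k} in the formal power series (u/sinh u)^{2n+1}. (Equivalently, the sum rule Σ_{k=0}^n 2^{k−n} (n!/k!) x_k = 0 holds for the Scasimir coefficients x_k = 2^{−k} k! C(2n,2k) (2k)! c_{2k}.) -/

import Mathlib

open scoped BigOperators
open Nat

noncomputable section

/-- The formal power series `sinh u = Σ u^{2j+1}/(2j+1)!`. -/
def sinhS : PowerSeries ℚ := PowerSeries.mk fun m => if m % 2 = 1 then (1:ℚ)/(m)! else 0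

/-- The formal power series `h = sinh(u)/u = Σ u^{2j}/(2j+1)!` (constant term 1, invertible). -/
def hS : PowerSeries ℚ := PowerSeries.mk fun m => if m % 2 = 0 then (1:ℚ)/(m+1)! else 0

/-- `c_m`, the coefficient of `u^m` in `(u/sinh u)^{2n+1} = (h⁻¹)^{2n+1}`. -/
def ccoef (n m : ℕ) : ℚ := PowerSeries.coeff m ((hS⁻¹)^(2*n+1))

/-- `y_k = (2k+2)! c_{2k} / (4^k (2n+1))`. -/
def ycoef (n k : ℕ) : ℚ := (((2*k+2))! : ℚ) * ccoef n (2*k) / (4^k * (2*(n:ℚ)+1))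

open PowerSeries

def coshS : PowerSeries ℚ := PowerSeries.mk fun m => if m % 2 = 0 then (1:ℚ)/(m)! else 0

lemma hconst : PowerSeries.constantCoeff hS ≠ 0 := by
  simp [hS, ← PowerSeries.coeff_zero_eq_constantCoeff, PowerSeries.coeff_mk]

lemma hg : hS * hS⁻¹ = 1 := PowerSeries.mul_inv_cancel _ hconst

lemma keyh : (PowerSeries.X : ℚ⟦X⟧) * (d⁄dX ℚ) hS = coshS - hS := by
  ext m
  cases m with
  | zero => simp [hS, coshS, PowerSeries.coeff_mk]
  | succ m =>
    rw [PowerSeries.coeff_succ_X_mul, PowerSeries.coeff_derivative]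
    simp only [hS, coshS, map_sub, PowerSeries.coeff_mk]
    rcases Nat.even_or_odd (m+1) with he | ho
    · have h2 : (m+1) % 2 = 0 := Nat.even_iff.mp he
      simp only [h2, if_true]
      have : ((m+1+1)! : ℚ) = (m+2) * (m+1)! := by
        rw [Nat.factorial_succ]; push_cast; ring
      rw [this]
      have h1 : ((m+1)! : ℚ) ≠ 0 := by positivity
      field_simp
      ring
    · have h2 : (m+1) % 2 = 1 := Nat.odd_iff.mp ho
      simp [h2]

lemma hgh (n : ℕ) : (hS⁻¹)^(2*n+1) * hS = (hS⁻¹)^(2*n) := by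
  rw [pow_succ, mul_assoc, mul_comm (hS⁻¹) hS, hg, mul_one]

lemma e1 (n : ℕ) (hn : 1 ≤ n) :
    (PowerSeries.X : ℚ⟦X⟧) * (d⁄dX ℚ) ((hS⁻¹)^(2*n)) =
      ((2*n : ℕ) : ℚ⟦X⟧) * ((hS⁻¹)^(2*n) - (hS⁻¹)^(2*n+1) * coshS) := by
  have hdg : (d⁄dX ℚ) (hS⁻¹) = -(hS⁻¹)^2 * (d⁄dX ℚ) hS := PowerSeries.derivative_inv' hS
  rw [Derivation.leibniz_pow, hdg, nsmul_eq_mul, smul_eq_mul]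
  have hpow : (hS⁻¹)^(2*n-1) * (hS⁻¹)^2 = (hS⁻¹)^(2*n+1) := by
    rw [← pow_add]; congr 1; omega
  have hx := keyh
  have hh := hgh n
  linear_combination (-(((2*n:ℕ):ℚ⟦X⟧)) * PowerSeries.X * (d⁄dX ℚ) hS) * hpow +
    (-(((2*n:ℕ):ℚ⟦X⟧)) * (hS⁻¹)^(2*n+1)) * hx + (((2*n:ℕ):ℚ⟦X⟧)) * hh

lemma coeff_zero (n : ℕ) (hn : 1 ≤ n) :
    PowerSeries.coeff (2*n) ((hS⁻¹)^(2*n+1) * coshS) = 0 := by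
  have e2 := congrArg (PowerSeries.coeff (2*n)) (e1 n hn)
  have h21 : 2*n = (2*n-1) + 1 := by omega
  rw [h21, PowerSeries.coeff_succ_X_mul, PowerSeries.coeff_derivative, ← h21] at e2
  rw [← map_natCast (PowerSeries.C (R := ℚ)) (2*n), PowerSeries.coeff_C_mul, map_sub] at e2
  have h2n : ((2*n : ℕ) : ℚ) ≠ 0 := by positivity
  have : ((2*n-1 : ℕ) : ℚ) + 1 = ((2*n : ℕ) : ℚ) := by
    have : (2*n-1) + 1 = 2*n := by omega
    exact_mod_cast congrArg (Nat.cast : ℕ → ℚ) this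
  rw [this] at e2
  have key : ((2*n : ℕ) : ℚ) * PowerSeries.coeff (2*n) ((hS⁻¹)^(2*n+1) * coshS) = 0 := by
    linear_combination e2
  exact (mul_eq_zero.mp key).resolve_left h2n

lemma sum_split (F : ℕ → ℚ) (m : ℕ) :
    ∑ i ∈ Finset.range (2*m+1), F i =
      ∑ k ∈ Finset.range (m+1), F (2*k) + ∑ k ∈ Finset.range m, F (2*k+1) := by
  induction m with
  | zero => simp
  | succ m ih =>
    have h1 : 2*(m+1)+1 = (2*m+1)+1+1 := by ring
    rw [h1, Finset.sum_range_succ, Finset.sum_range_succ, ih,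
      Finset.sum_range_succ (fun k => F (2*k)) (m+1), Finset.sum_range_succ (fun k => F (2*k+1)) m]
    have h2 : 2*m+1+1 = 2*(m+1) := by ring
    rw [h2]
    ring

/-- The sum rule `Σ_{k=0}^n C(2n,2k) (2k)! c_{2k} = 0`, equivalently
`Σ_{k=0}^n 2^{k−n} (n!/k!) x_k = 0` for the Scasimir coefficients
`x_k = 2^{−k} k! C(2n,2k) (2k)! c_{2k}`. -/
theorem stmt13 (n : ℕ) (hn : 1 ≤ n) :
    ∑ k ∈ Finset.range (n+1),
      (Nat.choose (2*n) (2*k) : ℚ) * (((2*k))! : ℚ) * ccoef n (2*k) = 0 := by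
  set F : ℕ → ℚ := fun i => ccoef n i * (if (2*n-i) % 2 = 0 then (1:ℚ)/(2*n-i)! else 0) with hF
  have hc : PowerSeries.coeff (2*n) ((hS⁻¹)^(2*n+1) * coshS) = ∑ i ∈ Finset.range (2*n+1), F i := by
    rw [PowerSeries.coeff_mul, Finset.Nat.sum_antidiagonal_eq_sum_range_succ_mk]
    simp [hF, ccoef, coshS, PowerSeries.coeff_mk]
  have hsum : ∑ i ∈ Finset.range (2*n+1), F i = 0 := by rw [← hc, coeff_zero n hn]
  rw [sum_split] at hsum
  have hodd : ∑ k ∈ Finset.range n, F (2*k+1) = 0 := by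
    apply Finset.sum_eq_zero
    intro k hk
    have hk' : k < n := Finset.mem_range.mp hk
    have : (2*n - (2*k+1)) % 2 = 1 := by omega
    simp [hF, this]
  rw [hodd, add_zero] at hsum
  have heq : ∀ k ∈ Finset.range (n+1),
      (Nat.choose (2*n) (2*k) : ℚ) * (((2*k))! : ℚ) * ccoef n (2*k) = ((2*n)! : ℚ) * F (2*k) := by
    intro k hk
    have hk' : k ≤ n := Nat.lt_succ_iff.mp (Finset.mem_range.mp hk)
    have h2k : 2*k ≤ 2*n := by omega
    have hmod : (2*n - 2*k) % 2 = 0 := by omega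
    have hcast : (Nat.choose (2*n) (2*k) : ℚ) = ((2*n)! : ℚ) / (((2*k))! * ((2*n-2*k))!) :=
      Nat.cast_choose ℚ h2k
    simp only [hF, hmod, if_true, hcast]
    have h1 : (((2*k))! : ℚ) ≠ 0 := by positivity
    have h2 : (((2*n-2*k))! : ℚ) ≠ 0 := by positivity
    field_simp
  rw [Finset.sum_congr rfl heq, ← Finset.mul_sum, hsum, mul_zero]

end
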